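/- For n ≥ 3, the Italian domination number of the Sierpiński graph S(K_n, 3) is 2n(n − 1). -/

import Mathlib

open Finset
open scoped Classical

/-- An Italian dominating function: `f : V → {0,1,2}` such that every vertex with
value 0 has neighbours of total weight at least 2. -/
def IsIDF {V : Type*} [Fintype V] (G : SimpleGraph V) (f : V → ℕ) : Prop :=
  (∀ v, f v ≤ 2) ∧
  ∀ v, f v = 0 → 2 ≤ ∑ u ∈ Finset.univ.filter fun u => G.Adj v u, f u

/-- The Italian domination number: minimum weight of an IDF. -/
noncomputable def italianDomNumber {V : Type*} [Fintype V] (G : SimpleGraph V) : ℕ :=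
  sInf {w | ∃ f, IsIDF G f ∧ ∑ v, f v = w}

/-- A perfect Italian dominating function: every vertex with value 0 has neighbours
of total weight exactly 2. -/
def IsPIDF {V : Type*} [Fintype V] (G : SimpleGraph V) (f : V → ℕ) : Prop :=
  (∀ v, f v ≤ 2) ∧
  ∀ v, f v = 0 → (∑ u ∈ Finset.univ.filter fun u => G.Adj v u, f u) = 2

/-- The perfect Italian domination number. -/
noncomputable def perfectItalianDomNumber {V : Type*} [Fintype V] (G : SimpleGraph V) : ℕ :=
  sInf {w | ∃ f, IsPIDF G f ∧ ∑ v, f v = w}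

/-- The Sierpiński graph `S(K_n, t)` on words of length `t` over an alphabet of size `n`. -/
def sierpinskiGraph (n t : ℕ) : SimpleGraph (Fin t → Fin n) :=
  SimpleGraph.fromRel (fun u v => ∃ i : Fin t,
    (∀ j, j < i → u j = v j) ∧ u i ≠ v i ∧ ∀ j, i < j → u j = v i ∧ v j = u i)


set_option linter.unusedSectionVars false

variable {n : ℕ}


def R1 (u v : Fin 3 → Fin n) : Prop :=
  u 0 ≠ v 0 ∧ u 1 = v 0 ∧ u 2 = v 0 ∧ v 1 = u 0 ∧ v 2 = u 0
def R2 (u v : Fin 3 → Fin n) : Prop :=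
  u 0 = v 0 ∧ u 1 ≠ v 1 ∧ u 2 = v 1 ∧ v 2 = u 1
def R3 (u v : Fin 3 → Fin n) : Prop :=
  u 0 = v 0 ∧ u 1 = v 1 ∧ u 2 ≠ v 2

lemma adj_iff (u v : Fin 3 → Fin n) :
    (sierpinskiGraph n 3).Adj u v ↔ R1 u v ∨ R2 u v ∨ R3 u v := by
  rw [sierpinskiGraph, SimpleGraph.fromRel_adj]
  constructor
  · rintro ⟨hne, h | h⟩
    · obtain ⟨i, h1, h2, h3⟩ := h
      fin_cases i
      · exact Or.inl ⟨h2, (h3 1 (by decide)).1, (h3 2 (by decide)).1,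
          (h3 1 (by decide)).2, (h3 2 (by decide)).2⟩
      · exact Or.inr (Or.inl ⟨h1 0 (by decide), h2, (h3 2 (by decide)).1, (h3 2 (by decide)).2⟩)
      · exact Or.inr (Or.inr ⟨h1 0 (by decide), h1 1 (by decide), h2⟩)
    · obtain ⟨i, h1, h2, h3⟩ := h
      fin_cases i
      · exact Or.inl ⟨fun h => h2 h.symm, (h3 1 (by decide)).2, (h3 2 (by decide)).2,
          (h3 1 (by decide)).1, (h3 2 (by decide)).1⟩
      · exact Or.inr (Or.inl ⟨(h1 0 (by decide)).symm, fun h => h2 h.symm,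
          (h3 2 (by decide)).2, (h3 2 (by decide)).1⟩)
      · exact Or.inr (Or.inr ⟨(h1 0 (by decide)).symm, (h1 1 (by decide)).symm,
          fun h => h2 h.symm⟩)
  · rintro (⟨h0, h1, h2, h3, h4⟩ | ⟨h0, h1, h2, h3⟩ | ⟨h0, h1, h2⟩)
    · refine ⟨fun h => h0 (congrFun h 0), Or.inl ⟨0, ?_, h0, ?_⟩⟩
      · intro j hj; exact absurd hj (by omega)
      · intro j hj
        fin_cases j
        · exact absurd hj (by decide)
        · exact ⟨h1, h3⟩
        · exact ⟨h2, h4⟩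
    · refine ⟨fun h => h1 (congrFun h 1), Or.inl ⟨1, ?_, h1, ?_⟩⟩
      · intro j hj
        fin_cases j
        · exact h0
        · exact absurd hj (by decide)
        · exact absurd hj (by decide)
      · intro j hj
        fin_cases j
        · exact absurd hj (by decide)
        · exact absurd hj (by decide)
        · exact ⟨h2, h3⟩
    · refine ⟨fun h => h2 (congrFun h 2), Or.inl ⟨2, ?_, h2, fun j hj => absurd hj (by omega)⟩⟩
      · intro j hj
        fin_cases j
        · exact h0
        · exact h1
        · exact absurd hj (by decide)

lemma vtx_eta (u : Fin 3 → Fin n) : ![u 0, u 1, u 2] = u := by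
  funext j; fin_cases j <;> simp

lemma sum_triple (F : (Fin 3 → Fin n) → ℕ) :
    ∑ v, F v = ∑ i, ∑ a, ∑ b, F ![i, a, b] := by
  have h1 : ∑ p : Fin n × Fin n × Fin n, F ![p.1, p.2.1, p.2.2]
      = ∑ i, ∑ a, ∑ b, F ![i, a, b] := by
    rw [Fintype.sum_prod_type]
    congr 1; funext i
    rw [Fintype.sum_prod_type]
  rw [← h1]
  apply Fintype.sum_bijective (fun u : Fin 3 → Fin n => ((u 0, u 1, u 2) : Fin n × Fin n × Fin n))
  · constructor
    · intro u v h
      simp only [Prod.mk.injEq] at h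
      rw [← vtx_eta u, ← vtx_eta v, h.1, h.2.1, h.2.2]
    · intro ⟨a, b, c⟩
      exact ⟨![a,b,c], rfl⟩
  · intro u
    simp [vtx_eta]

lemma vtx_eq (u : Fin 3 → Fin n) (a b c : Fin n)
    (h0 : a = u 0) (h1 : b = u 1) (h2 : c = u 2) : ![a,b,c] = u := by
  subst h0 h1 h2; exact vtx_eta u

@[simp] lemma vtx0 (a b c : Fin n) : ![a,b,c] 0 = a := rfl
@[simp] lemma vtx1 (a b c : Fin n) : ![a,b,c] 1 = b := rfl
@[simp] lemma vtx2 (a b c : Fin n) : ![a,b,c] 2 = c := rfl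

-- specific adjacencies
lemma adj_clique (i a c c' : Fin n) (h : c ≠ c') :
    (sierpinskiGraph n 3).Adj ![i,a,c] ![i,a,c'] :=
  (adj_iff _ _).2 (Or.inr (Or.inr ⟨rfl, rfl, h⟩))

lemma adj_swap (i a b : Fin n) (h : a ≠ b) :
    (sierpinskiGraph n 3).Adj ![i,a,b] ![i,b,a] :=
  (adj_iff _ _).2 (Or.inr (Or.inl ⟨rfl, h, rfl, rfl⟩))

lemma adj_link (i a : Fin n) (h : i ≠ a) :
    (sierpinskiGraph n 3).Adj ![i,a,a] ![a,i,i] :=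
  (adj_iff _ _).2 (Or.inl ⟨h, rfl, rfl, rfl, rfl⟩)

-- neighborhood supersets
lemma nbhd_subset_off (i a b : Fin n) (hba : b ≠ a) :
    (Finset.univ.filter fun u => (sierpinskiGraph n 3).Adj ![i,a,b] u) ⊆
      (Finset.univ.image fun c => ![i,a,c]) ∪ {![i,b,a]} := by
  intro u hu
  rw [Finset.mem_filter] at hu
  rcases (adj_iff _ _).1 hu.2 with ⟨h0, h1, h2, h3, h4⟩ | ⟨h0, h1, h2, h3⟩ | ⟨h0, h1, h2⟩
  · simp only [vtx0, vtx1, vtx2] at h1 h2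
    exact absurd (h2.trans h1.symm) hba
  · simp only [vtx0, vtx1, vtx2] at h0 h2 h3
    apply Finset.mem_union_right
    simp only [Finset.mem_singleton]
    rw [← vtx_eta u, ← h0, ← h2, ← h3]
  · simp only [vtx0, vtx1, vtx2] at h0 h1
    apply Finset.mem_union_left
    rw [Finset.mem_image]
    exact ⟨u 2, Finset.mem_univ _, vtx_eq u _ _ _ h0 h1 rfl⟩

lemma nbhd_subset_diag (i : Fin n) :
    (Finset.univ.filter fun u => (sierpinskiGraph n 3).Adj ![i,i,i] u) ⊆
      Finset.univ.image fun c => ![i,i,c] := by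
  intro u hu
  rw [Finset.mem_filter] at hu
  rcases (adj_iff _ _).1 hu.2 with ⟨h0, h1, h2, h3, h4⟩ | ⟨h0, h1, h2, h3⟩ | ⟨h0, h1, h2⟩
  · simp only [vtx0, vtx1, vtx2] at h0 h1
    exact absurd h1 h0
  · simp only [vtx0, vtx1, vtx2] at h1 h2
    exact absurd h2 h1
  · simp only [vtx0, vtx1, vtx2] at h0 h1
    rw [Finset.mem_image]
    exact ⟨u 2, Finset.mem_univ _, vtx_eq u _ _ _ h0 h1 rfl⟩

lemma inj_third (i a : Fin n) : Function.Injective fun c => (![i,a,c] : Fin 3 → Fin n) := by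
  intro c c' h
  exact congrFun h 2

lemma row_conc {n : ℕ} {g : Fin n → ℕ} (hw : ∑ c, g c = 1) {x : Fin n} (hx : 1 ≤ g x)
    {c : Fin n} (hc : c ≠ x) : g c = 0 := by
  by_contra h
  have h1 : 1 ≤ g c := Nat.one_le_iff_ne_zero.2 h
  have : g x + g c ≤ ∑ c, g c := by
    rw [← Finset.sum_pair (Ne.symm hc)]
    exact Finset.sum_le_sum_of_subset (Finset.subset_univ _)
  omega

lemma core_lemma {n : ℕ} (hn : 3 ≤ n) (i : Fin n) (g : Fin n → Fin n → ℕ)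
    (H1 : ∀ a b, b ≠ a → g a b = 0 → 2 ≤ (∑ c, g a c) + g b a)
    (H2 : g i i = 0 → 2 ≤ ∑ c, g i c) :
    2 * (n - 1) ≤ ∑ a, ∑ c, g a c := by
  obtain ⟨W, hW⟩ : ∃ W : Fin n → ℕ, ∀ a, W a = ∑ c, g a c := ⟨_, fun a => rfl⟩
  have hWtot : ∑ a, ∑ c, g a c = ∑ a, W a := Finset.sum_congr rfl (fun a _ => (hW a).symm)
  rw [hWtot]
  have H1' : ∀ a b, b ≠ a → g a b = 0 → 2 ≤ W a + g b a := by
    intro a b h h'; rw [hW]; exact H1 a b h h'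
  have H2' : g i i = 0 → 2 ≤ W i := by intro h; rw [hW]; exact H2 h
  have hentry : ∀ a b, g a b ≤ W a := by
    intro a b; rw [hW]
    exact Finset.single_le_sum (fun c _ => Nat.zero_le _) (Finset.mem_univ b)
  by_cases hz : ∃ a₀, W a₀ = 0
  · -- Case 1: an empty row
    obtain ⟨a₀, ha₀⟩ := hz
    have hrow : ∀ c, g a₀ c = 0 := by
      intro c
      have h0 : ∑ c, g a₀ c = 0 := by rw [← hW]; exact ha₀
      exact Finset.sum_eq_zero_iff.1 h0 c (Finset.mem_univ c)
    have hb : ∀ b ∈ Finset.univ.erase a₀, 2 ≤ W b := by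
      intro b hbm
      have h2 := H1' a₀ b (Finset.ne_of_mem_erase hbm) (hrow b)
      have h3 := hentry b a₀
      omega
    have h4 := Finset.card_nsmul_le_sum (Finset.univ.erase a₀) W 2 hb
    have hb4 : (Finset.univ.erase a₀).sum W = ∑ b ∈ Finset.univ.erase a₀, W b := rfl
    rw [hb4] at h4
    rw [smul_eq_mul, Finset.card_erase_of_mem (Finset.mem_univ _), Finset.card_univ,
      Fintype.card_fin] at h4
    have h5 : ∑ b ∈ Finset.univ.erase a₀, W b ≤ ∑ a, W a :=
      Finset.sum_le_sum_of_subset (Finset.subset_univ _)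
    omega
  · push_neg at hz
    have hpos : ∀ a, 1 ≤ W a := fun a => Nat.one_le_iff_ne_zero.2 (hz a)
    set T : Finset (Fin n) := Finset.univ.filter (fun a => W a = 1) with hT
    have main : ∀ a ∈ T, W a = 1 := fun a ha => (Finset.mem_filter.1 ha).2
    have rowW : ∀ a ∈ T, ∑ c, g a c = 1 := by
      intro a ha; rw [← hW]; exact main a ha
    have hrest : ∀ a ∈ Finset.univ \ T, 2 ≤ W a := by
      intro a ha
      rw [Finset.mem_sdiff, hT, Finset.mem_filter] at ha
      have h1 := hpos a
      have h2 : ¬ W a = 1 := fun h => ha.2 ⟨Finset.mem_univ a, h⟩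
      omega
    have sumsplit : ∑ a ∈ Finset.univ \ T, W a + ∑ a ∈ T, W a = ∑ a, W a :=
      Finset.sum_sdiff (Finset.subset_univ T)
    have hTs : ∑ a ∈ T, W a = T.card := by
      rw [Finset.sum_congr rfl main]; simp
    have hRs := Finset.card_nsmul_le_sum (Finset.univ \ T) W 2 hrest
    have hbRs : (Finset.univ \ T).sum W = ∑ a ∈ Finset.univ \ T, W a := rfl
    rw [hbRs] at hRs
    rw [smul_eq_mul, Finset.card_sdiff_of_subset (Finset.subset_univ T), Finset.card_univ,
      Fintype.card_fin] at hRs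
    have hTcard : T.card ≤ n := by
      have := Finset.card_le_univ T; simpa using this
    -- key claim
    have key : T.card ≤ 2 ∨ (T.card ≤ W i ∧ i ∉ T) := by
      by_cases hsmall : T.card ≤ 2
      · exact Or.inl hsmall
      push_neg at hsmall
      by_cases hiT : i ∈ T
      · -- subcase W i = 1 : contradiction
        exfalso
        have hwi : W i = 1 := main i hiT
        have hgii : 1 ≤ g i i := by
          by_contra h
          have h0 : g i i = 0 := by omega
          have := H2' h0
          omega
        have hconc : ∀ a, a ≠ i → g i a = 0 := fun a ha => row_conc (rowW i hiT) hgii ha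
        have hA : ∀ a ∈ T.erase i, 1 ≤ g a i := by
          intro a ha
          obtain ⟨hai, haT⟩ := Finset.mem_erase.1 ha
          by_contra h
          have h0 : g a i = 0 := by omega
          have h1 := H1' a i (Ne.symm hai) h0
          rw [main a haT] at h1
          have h2 := hconc a hai
          omega
        have hcard2 : 1 < (T.erase i).card := by
          have := Finset.card_erase_of_mem hiT
          omega
        obtain ⟨a, ha, b, hb, hab⟩ := Finset.one_lt_card.1 hcard2
        have haT := (Finset.mem_erase.1 ha).2
        have hai := (Finset.mem_erase.1 ha).1
        have hbi := (Finset.mem_erase.1 hb).1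
        have hbT := (Finset.mem_erase.1 hb).2
        have hga : g a b = 0 := row_conc (rowW a haT) (hA a ha) (fun h => hbi (by rw [← h]))
        have h1 := H1' a b (fun h => hab (h.symm)) hga
        rw [main a haT] at h1
        have hgb : g b a = 0 := row_conc (rowW b hbT) (hA b hb) (fun h => hai (by rw [← h]))
        omega
      · -- subcase W i ≥ 2
        right
        refine ⟨?_, hiT⟩
        have hwi2 : 2 ≤ W i := hrest i (by simp [hiT])
        set T' : Finset (Fin n) := T.filter (fun a => g a i = 0) with hT'
        have hT'i : ∀ a ∈ T', 1 ≤ g i a := by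
          intro a ha
          obtain ⟨haT, hgai⟩ := Finset.mem_filter.1 ha
          have hai : a ≠ i := fun h => hiT (h ▸ haT)
          have h1 := H1' a i (Ne.symm hai) hgai
          rw [main a haT] at h1
          omega
        have hwiT' : T'.card ≤ W i := by
          calc T'.card = ∑ a ∈ T', 1 := by simp
            _ ≤ ∑ a ∈ T', g i a := Finset.sum_le_sum hT'i
            _ ≤ ∑ a, g i a := Finset.sum_le_sum_of_subset (Finset.subset_univ _)
            _ = W i := (hW i).symm
        have hcompl : (T \ T').card ≤ 1 := by
          rw [Finset.card_le_one]
          intro a ha b hb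
          by_contra hab
          obtain ⟨haT, haT'⟩ := Finset.mem_sdiff.1 ha
          obtain ⟨hbT, hbT'⟩ := Finset.mem_sdiff.1 hb
          have hgai : 1 ≤ g a i := by
            rw [hT', Finset.mem_filter] at haT'
            have h9 : g a i ≠ 0 := fun h => haT' ⟨haT, h⟩
            omega
          have hgbi : 1 ≤ g b i := by
            rw [hT', Finset.mem_filter] at hbT'
            have h9 : g b i ≠ 0 := fun h => hbT' ⟨hbT, h⟩
            omega
          have hbi : b ≠ i := fun h => hiT (h ▸ hbT)
          have hai : a ≠ i := fun h => hiT (h ▸ haT)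
          have hgab : g a b = 0 := row_conc (rowW a haT) hgai hbi
          have h1 := H1' a b (Ne.symm hab) hgab
          rw [main a haT] at h1
          have h2 : g b a = 0 := row_conc (rowW b hbT) hgbi hai
          omega
        by_contra hwi
        push_neg at hwi
        have hT'T : T' ⊆ T := Finset.filter_subset _ _
        have hcards : T.card = T'.card + (T \ T').card := by
          rw [Finset.card_sdiff_of_subset hT'T]
          have := Finset.card_le_card hT'T
          omega
        have hj : (T \ T').Nonempty := by
          rw [← Finset.card_pos]
          omega
        obtain ⟨j₀, hj₀⟩ := hj
        obtain ⟨hj₀T, hj₀T'⟩ := Finset.mem_sdiff.1 hj₀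
        have hgj₀i : 1 ≤ g j₀ i := by
          rw [hT', Finset.mem_filter] at hj₀T'
          have h9 : g j₀ i ≠ 0 := fun h => hj₀T' ⟨hj₀T, h⟩
          omega
        have hj₀i : j₀ ≠ i := fun h => hiT (h ▸ hj₀T)
        have hstep : ∀ a ∈ T', 1 ≤ g a j₀ := by
          intro a ha
          obtain ⟨haT, hgai⟩ := Finset.mem_filter.1 ha
          have haj₀ : a ≠ j₀ := fun h => by
            rw [h] at hgai
            omega
          by_contra h
          have h0 : g a j₀ = 0 := by omega
          have h1 := H1' a j₀ (Ne.symm haj₀) h0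
          rw [main a haT] at h1
          have hia : a ≠ i := fun h => hiT (h ▸ haT)
          have h2 : g j₀ a = 0 := row_conc (rowW j₀ hj₀T) hgj₀i hia
          omega
        have hT'2 : 1 < T'.card := by omega
        obtain ⟨a, ha, b, hb, hab⟩ := Finset.one_lt_card.1 hT'2
        have haT := (Finset.mem_filter.1 ha).1
        have hbT := (Finset.mem_filter.1 hb).1
        have haj₀ : a ≠ j₀ := fun h => hj₀T' (h ▸ ha)
        have hbj₀ : b ≠ j₀ := fun h => hj₀T' (h ▸ hb)
        have hgab : g a b = 0 := row_conc (rowW a haT) (hstep a ha) (fun h => hbj₀ (by rw [← h]))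
        have h1 := H1' a b (Ne.symm hab) hgab
        rw [main a haT] at h1
        have h2 : g b a = 0 := row_conc (rowW b hbT) (hstep b hb) (fun h => haj₀ (by rw [← h]))
        omega
    rcases key with hk | ⟨hk, hiT⟩
    · omega
    · have hiTc : i ∈ Finset.univ \ T := by simp [hiT]
      have hsplit2 : W i + ∑ a ∈ (Finset.univ \ T).erase i, W a = ∑ a ∈ Finset.univ \ T, W a :=
        Finset.add_sum_erase _ _ hiTc
      have hrest2 := Finset.card_nsmul_le_sum ((Finset.univ \ T).erase i) W 2
        (fun a ha => hrest a (Finset.mem_of_mem_erase ha))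
      have hbr2 : ((Finset.univ \ T).erase i).sum W = ∑ a ∈ (Finset.univ \ T).erase i, W a := rfl
      rw [hbr2] at hrest2
      rw [smul_eq_mul, Finset.card_erase_of_mem hiTc, Finset.card_sdiff_of_subset (Finset.subset_univ T),
        Finset.card_univ, Fintype.card_fin] at hrest2
      have hTn : T.card ≤ n - 1 := by
        have hsub : T ⊆ Finset.univ.erase i := fun a ha =>
          Finset.mem_erase.2 ⟨fun h => hiT (h ▸ ha), Finset.mem_univ a⟩
        have := Finset.card_le_card hsub
        rwa [Finset.card_erase_of_mem (Finset.mem_univ i), Finset.card_univ,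
          Fintype.card_fin] at this
      omega

lemma lower_bound (hn : 3 ≤ n) (f : (Fin 3 → Fin n) → ℕ)
    (hf : IsIDF (sierpinskiGraph n 3) f) : 2 * n * (n - 1) ≤ ∑ v, f v := by
  rw [sum_triple]
  have percopy : ∀ i : Fin n, 2 * (n - 1) ≤ ∑ a, ∑ b, f ![i, a, b] := by
    intro i
    apply core_lemma hn i
    · -- H1
      intro a b hba h0
      have hdisj : Disjoint (Finset.univ.image fun c => ![i,a,c]) ({![i,b,a]} : Finset _) := by
        rw [Finset.disjoint_singleton_right, Finset.mem_image]
        rintro ⟨c, -, hc⟩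
        have h9 := congrFun hc 1
        simp only [vtx1] at h9
        exact hba h9.symm
      calc 2 ≤ ∑ u ∈ Finset.univ.filter fun u => (sierpinskiGraph n 3).Adj ![i,a,b] u, f u :=
            hf.2 ![i,a,b] h0
        _ ≤ ∑ u ∈ ((Finset.univ.image fun c => ![i,a,c]) ∪ {![i,b,a]}), f u :=
            Finset.sum_le_sum_of_subset (nbhd_subset_off i a b hba)
        _ = (∑ u ∈ Finset.univ.image (fun c => ![i,a,c]), f u) + ∑ u ∈ ({![i,b,a]} : Finset _), f u :=
            Finset.sum_union hdisj
        _ = (∑ c, f ![i,a,c]) + f ![i,b,a] := by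
            rw [Finset.sum_image (fun x _ y _ h => inj_third i a h), Finset.sum_singleton]
    · -- H2
      intro h0
      calc 2 ≤ ∑ u ∈ Finset.univ.filter fun u => (sierpinskiGraph n 3).Adj ![i,i,i] u, f u :=
            hf.2 ![i,i,i] h0
        _ ≤ ∑ u ∈ Finset.univ.image (fun c => ![i,i,c]), f u :=
            Finset.sum_le_sum_of_subset (nbhd_subset_diag i)
        _ = ∑ c, f ![i,i,c] := Finset.sum_image (fun x _ y _ h => inj_third i i h)
  calc 2 * n * (n - 1) = n * (2 * (n - 1)) := by
        rw [mul_comm 2 n, mul_assoc]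
    _ = ∑ _i : Fin n, 2 * (n - 1) := by
        rw [Finset.sum_const, Finset.card_univ, Fintype.card_fin, smul_eq_mul]
    _ ≤ ∑ i : Fin n, ∑ a, ∑ b, f ![i, a, b] := Finset.sum_le_sum (fun i _ => percopy i)

-- Fin n arithmetic facts
open Fin.CommRing in
lemma fin_two_ne (hn : 3 ≤ n) [NeZero n] : ((2:ℕ) : Fin n) ≠ 0 := by
  rw [Ne, Fin.natCast_eq_zero]
  intro h
  exact absurd (Nat.le_of_dvd (by norm_num) h) (by omega)

open Fin.CommRing in
lemma fin_one_ne (hn : 3 ≤ n) [NeZero n] : ((1:ℕ) : Fin n) ≠ 0 := by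
  rw [Ne, Fin.natCast_eq_zero]
  intro h
  exact absurd (Nat.le_of_dvd (by norm_num) h) (by omega)

open Fin.CommRing in
lemma finA (hn : 3 ≤ n) [NeZero n] (i : Fin n) : i - 1 ≠ i + 1 := by
  intro h
  have h0 : (i+1) - (i-1) = 0 := by rw [← h]; exact sub_self _
  have h2 : ((i:Fin n)+1) - (i-1) = ((2:ℕ):Fin n) := by push_cast; ring
  exact fin_two_ne hn (h2 ▸ h0)

open Fin.CommRing in
lemma finB (hn : 3 ≤ n) [NeZero n] (i : Fin n) : i + 1 ≠ i := by
  rw [Ne, add_eq_left]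
  intro h
  exact fin_one_ne hn (by rw [← h]; push_cast; ring)

open Fin.CommRing in
lemma finC (hn : 3 ≤ n) [NeZero n] (i : Fin n) : i - 1 ≠ i := by
  rw [Ne, sub_eq_self]
  intro h
  exact fin_one_ne hn (by rw [← h]; push_cast; ring)

def fUp (n : ℕ) [NeZero n] : (Fin 3 → Fin n) → ℕ := fun u =>
  if u 2 = u 0 - 1 then 1
  else if u 2 = u 0 + 1 ∧ u 1 ≠ u 0 + 1 ∧ u 1 ≠ u 0 - 1 then 1 else 0

section eval
variable [NeZero n]

lemma fUp_le (u : Fin 3 → Fin n) : fUp n u ≤ 2 := by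
  unfold fUp; split_ifs <;> norm_num

lemma fUp_eval1 (i j : Fin n) : fUp n ![i,j,i-1] = 1 := by
  unfold fUp
  simp only [vtx0, vtx1, vtx2]
  simp

lemma fUp_eval2 (hn : 3 ≤ n) (i j : Fin n) (hj1 : j ≠ i+1) (hj2 : j ≠ i-1) :
    fUp n ![i,j,i+1] = 1 := by
  unfold fUp
  simp only [vtx0, vtx1, vtx2]
  rw [if_neg (by exact (finA hn i).symm)]
  simp [hj1, hj2]

end eval

section upper
variable [NeZero n]

lemma two_le_nsum (G : SimpleGraph (Fin 3 → Fin n)) (f : (Fin 3 → Fin n) → ℕ)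
    (v x y : Fin 3 → Fin n) (hxy : x ≠ y) (hx : G.Adj v x) (hy : G.Adj v y)
    (h1 : 1 ≤ f x) (h2 : 1 ≤ f y) :
    2 ≤ ∑ u ∈ Finset.univ.filter fun u => G.Adj v u, f u := by
  have hsub : ({x, y} : Finset _) ⊆ Finset.univ.filter fun u => G.Adj v u := by
    intro u hu
    rw [Finset.mem_insert, Finset.mem_singleton] at hu
    rcases hu with rfl | rfl <;> exact Finset.mem_filter.2 ⟨Finset.mem_univ _, by assumption⟩
  calc 2 ≤ f x + f y := by omega
    _ = ∑ u ∈ ({x, y} : Finset _), f u := (Finset.sum_pair hxy).symm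
    _ ≤ _ := Finset.sum_le_sum_of_subset hsub

lemma fUp_isIDF (hn : 3 ≤ n) : IsIDF (sierpinskiGraph n 3) (fUp n) := by
  constructor
  · exact fun v => fUp_le v
  intro v h0
  obtain ⟨i, j, k, rfl⟩ : ∃ i j k, v = ![i,j,k] := ⟨_, _, _, (vtx_eta v).symm⟩
  have hk1 : k ≠ i - 1 := by
    intro h
    rw [h, fUp_eval1] at h0
    omega
  by_cases hj : j ≠ i + 1 ∧ j ≠ i - 1
  · -- generic middle coordinate
    have hk2 : k ≠ i + 1 := by
      intro h
      rw [h, fUp_eval2 hn i j hj.1 hj.2] at h0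
      omega
    exact two_le_nsum _ _ _ ![i,j,i-1] ![i,j,i+1]
      (fun h => finA hn i (congrFun h 2))
      (adj_clique i j k (i-1) (fun h => hk1 h))
      (adj_clique i j k (i+1) (fun h => hk2 h))
      (le_of_eq (fUp_eval1 i j).symm)
      (le_of_eq (fUp_eval2 hn i j hj.1 hj.2).symm)
  · push_neg at hj
    by_cases hj1 : j = i + 1
    · -- j = i+1
      by_cases hkj : k = j
      · -- v = (i, i+1, i+1): use clique nbr (i,j,i-1) and link nbr (i+1,i,i)
        subst hkj hj1
        refine two_le_nsum _ _ _ ![i,i+1,i-1] ![i+1,i,i]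
          (fun h => (finB hn i) (congrFun h 0).symm)
          (adj_clique i (i+1) (i+1) (i-1) (fun h => hk1 h))
          (?_)
          (le_of_eq (fUp_eval1 i (i+1)).symm)
          (?_)
        · exact adj_link i (i+1) (fun h => finB hn i h.symm)
        · have h9 := fUp_eval1 (n := n) (i+1) i
          rw [show (i+1:Fin n)-1 = i from add_sub_cancel_right i 1] at h9
          omega
      · -- k ≠ j : clique nbr (i,j,i-1) and swap nbr (i,k,i+1)
        subst hj1
        have hknot : k ≠ i + 1 := fun h => hkj h
        refine two_le_nsum _ _ _ ![i,i+1,i-1] ![i,k,i+1]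
          (fun h => finA hn i (congrFun h 2))
          (adj_clique i (i+1) k (i-1) (fun h => hk1 h))
          (adj_swap i (i+1) k (fun h => hkj h.symm))
          (le_of_eq (fUp_eval1 i (i+1)).symm)
          (le_of_eq (fUp_eval2 hn i k hknot hk1).symm)
    · -- j = i - 1
      have hj2 : j = i - 1 := hj hj1
      subst hj2
      have hkj : k ≠ i - 1 := hk1
      refine two_le_nsum _ _ _ ![i,i-1,i-1] ![i,k,i-1]
        (fun h => hkj (congrFun h 1).symm)
        (adj_clique i (i-1) k (i-1) (fun h => hk1 h))
        (adj_swap i (i-1) k (fun h => hkj h.symm))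
        (le_of_eq (fUp_eval1 i (i-1)).symm)
        (le_of_eq (fUp_eval1 i k).symm)

lemma fUp_weight (hn : 3 ≤ n) : ∑ v, fUp n v = 2 * n * (n - 1) := by
  rw [sum_triple]
  have step1 : ∀ i j : Fin n, ∑ k, fUp n ![i,j,k]
      = 1 + (if j ≠ i+1 ∧ j ≠ i-1 then 1 else 0) := by
    intro i j
    have hpt : ∀ k, fUp n ![i,j,k] = (if k = i-1 then 1 else 0) +
        (if j ≠ i+1 ∧ j ≠ i-1 then (if k = i+1 then 1 else 0) else 0) := by
      intro k
      by_cases h1 : k = i - 1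
      · subst h1
        rw [fUp_eval1, if_pos rfl]
        by_cases hP : j ≠ i+1 ∧ j ≠ i-1
        · rw [if_pos hP, if_neg (finA hn i)]
        · rw [if_neg hP]
      · rw [if_neg h1]
        by_cases hP : j ≠ i+1 ∧ j ≠ i-1
        · rw [if_pos hP]
          by_cases h2 : k = i + 1
          · subst h2
            rw [fUp_eval2 hn i j hP.1 hP.2, if_pos rfl]
          · rw [if_neg h2]
            unfold fUp
            simp only [vtx0, vtx1, vtx2]
            show (if k = i - 1 then 1 else if k = i + 1 ∧ j ≠ i + 1 ∧ j ≠ i - 1 then 1 else 0) = 0 + 0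
            rw [if_neg h1, if_neg (fun hc => h2 hc.1)]
        · rw [if_neg hP]
          unfold fUp
          simp only [vtx0, vtx1, vtx2]
          show (if k = i - 1 then 1 else if k = i + 1 ∧ j ≠ i + 1 ∧ j ≠ i - 1 then 1 else 0) = 0 + 0
          rw [if_neg h1, if_neg (fun hc => hP ⟨hc.2.1, hc.2.2⟩)]
    rw [Finset.sum_congr rfl (fun k _ => hpt k), Finset.sum_add_distrib]
    congr 1
    · rw [Finset.sum_ite_eq' Finset.univ (i-1) (fun _ => 1), if_pos (Finset.mem_univ _)]
    · by_cases hP : j ≠ i+1 ∧ j ≠ i-1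
      · simp only [if_pos hP]
        rw [Finset.sum_ite_eq' Finset.univ (i+1) (fun _ => 1), if_pos (Finset.mem_univ _)]
      · simp only [if_neg hP]
        simp
  have step2 : ∀ i : Fin n, ∑ j, ∑ k, fUp n ![i,j,k] = n + (n - 2) := by
    intro i
    rw [Finset.sum_congr rfl (fun j _ => step1 i j), Finset.sum_add_distrib]
    congr 1
    · simp
    · have hfe : Finset.univ.filter (fun j : Fin n => j ≠ i+1 ∧ j ≠ i-1)
          = Finset.univ \ {i+1, i-1} := by
        ext j
        simp [and_comm]
      rw [Finset.sum_ite, Finset.sum_const, Finset.sum_const, smul_eq_mul, mul_one,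
        smul_eq_mul, mul_zero, add_zero, hfe, Finset.card_sdiff_of_subset (Finset.subset_univ _),
        Finset.card_univ, Fintype.card_fin]
      congr 1
      rw [Finset.card_insert_of_notMem (by simpa using (finA hn i).symm), Finset.card_singleton]
  rw [Finset.sum_congr rfl (fun i _ => step2 i), Finset.sum_const, Finset.card_univ,
    Fintype.card_fin, smul_eq_mul]
  have h2 : n + (n - 2) = 2 * (n - 1) := by omega
  rw [h2, mul_comm 2 n, ← mul_assoc, mul_comm n 2]

end upper

theorem italianDom_sierpinski_three (n : ℕ) (hn : 3 ≤ n) :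
    italianDomNumber (sierpinskiGraph n 3) = 2 * n * (n - 1) := by
  haveI : NeZero n := ⟨by omega⟩
  have hmem : 2 * n * (n - 1) ∈
      {w | ∃ f, IsIDF (sierpinskiGraph n 3) f ∧ ∑ v, f v = w} :=
    ⟨fUp n, fUp_isIDF hn, fUp_weight hn⟩
  apply le_antisymm
  · exact Nat.sInf_le hmem
  · rw [italianDomNumber]
    obtain ⟨f, hf, hw⟩ := Nat.sInf_mem (⟨_, hmem⟩ : Set.Nonempty
      {w | ∃ f, IsIDF (sierpinskiGraph n 3) f ∧ ∑ v, f v = w})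
    rw [← hw]
    exact lower_bound hn f hf
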